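/- Let A be closed in K^n, and suppose A ∩ B_I is the preimage under φ_I of the zero locus of a continuous function on K^n for every I ⊆ {1,…,n}. Then A is the zero locus of a continuous function on K^n. In particular, to prove that every closed (definable) set is a zero locus, one may assume the set is bounded. -/

import Mathlib

/-- If, for every `I ⊆ {1,…,n}`, the piece `A ∩ B_I` of a closed set `A ⊆ K^n` is the
preimage under `φ_I` of the zero locus of a continuous function on `K^n`, then `A`
itself is the zero locus of a continuous function on `K^n`. -/
theorem zeroLocus_from_clopen_pieces {K : Type*} [NormedField K]
    [IsUltrametricDist K] {n : ℕ} (A : Set (Fin n → K)) (hA : IsClosed A)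
    (h : ∀ I : Finset (Fin n), ∃ g : (Fin n → K) → K, Continuous g ∧
      ∀ x ∈ {y : Fin n → K | ∀ i, if i ∈ I then ‖y i‖ ≤ 1 else 1 < ‖y i‖},
        (x ∈ A ↔ g (fun i => if i ∈ I then x i else (x i)⁻¹) = 0)) :
    ∃ g : (Fin n → K) → K, Continuous g ∧ A = g ⁻¹' {0} := by
  classical
  choose g hgc hgA using h
  set I : (Fin n → K) → Finset (Fin n) :=
    fun x => Finset.univ.filter (fun i => ‖x i‖ ≤ 1) with hI
  have hmemI : ∀ (x : Fin n → K) (i : Fin n), i ∈ I x ↔ ‖x i‖ ≤ 1 := by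
    intro x i; simp [hI]
  set φ : (Fin n → K) → (Fin n → K) :=
    fun x i => if ‖x i‖ ≤ 1 then x i else (x i)⁻¹ with hφ
  refine ⟨fun x => g (I x) (φ x), ?_, ?_⟩
  · rw [continuous_iff_continuousAt]
    intro x
    -- clopen neighborhood on which the index set is constant
    set U : Set (Fin n → K) := ⋂ i, {y : Fin n → K | ‖y i‖ ≤ 1 ↔ ‖x i‖ ≤ 1} with hU
    have hUopen : IsOpen U := by
      refine isOpen_iInter_of_finite fun i => ?_
      by_cases hx : ‖x i‖ ≤ 1
      · have : {y : Fin n → K | ‖y i‖ ≤ 1 ↔ ‖x i‖ ≤ 1}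
            = (fun y : Fin n → K => y i) ⁻¹' (Metric.closedBall 0 1) := by
          ext y; simp [hx, mem_closedBall_zero_iff]
        rw [this]
        exact (IsUltrametricDist.isOpen_closedBall (0 : K) one_ne_zero).preimage
          (continuous_apply i)
      · have : {y : Fin n → K | ‖y i‖ ≤ 1 ↔ ‖x i‖ ≤ 1}
            = (fun y : Fin n → K => y i) ⁻¹' (Metric.closedBall 0 1)ᶜ := by
          ext y; simp [hx, mem_closedBall_zero_iff]
        rw [this]
        exact (Metric.isClosed_closedBall.isOpen_compl).preimage (continuous_apply i)
    have hxU : x ∈ U := by simp [hU]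
    have hUnhds : U ∈ nhds x := hUopen.mem_nhds hxU
    -- the "frozen" comparison function
    set ψ : (Fin n → K) → (Fin n → K) :=
      fun y i => if ‖x i‖ ≤ 1 then y i else (y i)⁻¹ with hψ
    have hψc : ContinuousAt ψ x := by
      rw [continuousAt_pi]
      intro i
      by_cases hx : ‖x i‖ ≤ 1
      · simpa [hψ, hx] using (continuous_apply i).continuousAt (x := x)
      · have hx0 : x i ≠ 0 := by
          intro h0; apply hx; simp [h0]
        simp only [hψ, hx, if_false]
        exact ((continuous_apply i).continuousAt (x := x)).inv₀ hx0
    have hcomp : ContinuousAt (fun y => g (I x) (ψ y)) x :=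
      ((hgc (I x)).continuousAt).comp hψc
    refine ContinuousAt.congr hcomp ?_
    filter_upwards [hUnhds] with y hy
    have hiff : ∀ i, ‖y i‖ ≤ 1 ↔ ‖x i‖ ≤ 1 := by
      intro i; exact Set.mem_iInter.mp hy i
    have hIeq : I y = I x := by
      ext i; simp [hmemI, hiff i]
    have hφψ : φ y = ψ y := by
      funext i; simp only [hφ, hψ, hiff i]
    rw [hIeq, hφψ]
  · ext x
    have hmemB : x ∈ {y : Fin n → K | ∀ i, if i ∈ I x then ‖y i‖ ≤ 1 else 1 < ‖y i‖} := by
      intro i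
      by_cases hx : ‖x i‖ ≤ 1
      · simp [hmemI x i, hx]
      · simp [hmemI x i, hx, lt_of_not_ge hx]
    have := hgA (I x) x hmemB
    have hφeq : (fun i => if i ∈ I x then x i else (x i)⁻¹) = φ x := by
      funext i; simp only [hφ, hmemI x i]
    rw [hφeq] at this
    simpa using this
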